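/- Let C = ⟨a, b⟩ be an HFP-code of type Q of length 4n. Then the permutation π_a associated to the generator a has order 2n. -/

import Mathlib

/-- The action of a coordinate permutation `σ` on a binary vector:
`(permAct σ v) i = v (σ⁻¹ i)`. -/
def permAct {m : ℕ} (σ : Equiv.Perm (Fin m)) (v : Fin m → ZMod 2) : Fin m → ZMod 2 :=
  fun i => v (σ.symm i)

/-- The propelinear operation `x · y = x + π_x(y)`. -/
def pmul {m : ℕ} (π : (Fin m → ZMod 2) → Equiv.Perm (Fin m))
    (x y : Fin m → ZMod 2) : Fin m → ZMod 2 :=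
  x + permAct (π x) y

/-- Powers with respect to the propelinear operation. -/
def ppow {m : ℕ} (π : (Fin m → ZMod 2) → Equiv.Perm (Fin m))
    (g : Fin m → ZMod 2) : ℕ → Fin m → ZMod 2
  | 0 => 0
  | k + 1 => pmul π g (ppow π g k)

/-- The all-ones vector. -/
def allOnes (m : ℕ) : Fin m → ZMod 2 := fun _ => 1

lemma pmul_zero_left {m : ℕ} (π : (Fin m → ZMod 2) → Equiv.Perm (Fin m))
    (hπ0 : π 0 = 1) (y : Fin m → ZMod 2) : pmul π 0 y = y := by
  funext i; simp [pmul, permAct, hπ0]; rfl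

lemma pmul_assoc {m : ℕ} (π : (Fin m → ZMod 2) → Equiv.Perm (Fin m))
    (x y z : Fin m → ZMod 2) (h : π (pmul π x y) = π x * π y) :
    pmul π (pmul π x y) z = pmul π x (pmul π y z) := by
  funext i
  have h2 : (π (pmul π x y)).symm i = (π y).symm ((π x).symm i) := by
    rw [h]; rfl
  show pmul π x y i + z ((π (pmul π x y)).symm i) = _
  rw [h2]
  simp [pmul, permAct, add_assoc]

/-- Let `C = ⟨a, b⟩` be an HFP-code of type Q of length `4n`
(the group `(C, ·)` is dicyclic: `a⁴ⁿ = 0`, `a²ⁿ = b² = u`, `b⁻¹ a b = a⁻¹`).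
Then the permutation `π_a` associated to the generator `a` has order `2n`. -/
theorem stmt_16 (n : ℕ) (hn : 0 < n) (C : Finset (Fin (4*n) → ZMod 2))
    (π : (Fin (4*n) → ZMod 2) → Equiv.Perm (Fin (4*n)))
    (h0 : (0 : Fin (4*n) → ZMod 2) ∈ C) (hu : allOnes (4*n) ∈ C)
    (hcard : C.card = 8*n)
    (hclosed : ∀ x ∈ C, ∀ y ∈ C, pmul π x y ∈ C)
    (hhom : ∀ x ∈ C, ∀ y ∈ C, π (pmul π x y) = π x * π y)
    (hπ0 : π 0 = 1) (hπu : π (allOnes (4*n)) = 1)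
    (hfree : ∀ x ∈ C, x ≠ 0 → x ≠ allOnes (4*n) → ∀ i, π x i ≠ i)
    (hdist : ∀ x ∈ C, ∀ y ∈ C, x ≠ y → x ≠ y + allOnes (4*n) → hammingDist x y = 2*n)
    (a b : Fin (4*n) → ZMod 2) (ha : a ∈ C) (hb : b ∈ C)
    (haord : ∀ m : ℕ, 0 < m → m < 4*n → ppow π a m ≠ 0)
    (ha4n : ppow π a (4*n) = 0)
    (ha2n : ppow π a (2*n) = allOnes (4*n))
    (hb2 : pmul π b b = allOnes (4*n))
    (hrel : pmul π a b = pmul π b (ppow π a (4*n - 1)))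
    (hgen : ∀ x ∈ C, ∃ i j : ℕ, x = pmul π (ppow π a i) (ppow π b j))
    : orderOf (π a) = 2*n := by

  -- membership of powers
  have hmem : ∀ k, ppow π a k ∈ C := by
    intro k
    induction k with
    | zero => exact h0
    | succ k ih => exact hclosed a ha _ ih
  -- π of powers
  have hpi : ∀ k, π (ppow π a k) = (π a) ^ k := by
    intro k
    induction k with
    | zero => simpa [ppow] using hπ0
    | succ k ih =>
      show π (pmul π a (ppow π a k)) = _
      rw [hhom a ha _ (hmem k), ih, pow_succ']
  -- additivity of ppow
  have hadd : ∀ k l, ppow π a (k + l) = pmul π (ppow π a k) (ppow π a l) := by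
    intro k l
    induction k with
    | zero => simp [ppow, pmul_zero_left π hπ0]
    | succ k ih =>
      have : k + 1 + l = (k + l) + 1 := by omega
      rw [this]
      show pmul π a (ppow π a (k + l)) = _
      rw [ih, ← pmul_assoc π a (ppow π a k) (ppow π a l) (hhom a ha _ (hmem k))]
      rfl
  have h2n : (π a) ^ (2 * n) = 1 := by
    rw [← hpi, ha2n, hπu]
  have hdvd : orderOf (π a) ∣ 2 * n := orderOf_dvd_of_pow_eq_one h2n
  have hpos : 0 < orderOf (π a) := orderOf_pos _
  rcases lt_or_eq_of_le (Nat.le_of_dvd (by omega) hdvd) with hlt | heq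
  · exfalso
    set r := orderOf (π a) with hr
    have hpr : (π a) ^ r = 1 := pow_orderOf_eq_one _
    have hx : ppow π a (2 * r) = 0 := by
      have h2r : 2 * r = r + r := by omega
      rw [h2r, hadd, pmul]
      funext i
      simp [permAct, hpi, hpr]
      exact CharTwo.add_self_eq_zero _
    exact haord (2 * r) (by omega) (by omega) hx
  · exact heq
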